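/- arXiv:1702.05985 — 2 statements merged into one kernel-verified Lean document; each statement's English description precedes it below -/
import Mathlib

section
/- Cramér's theorem for Bernoulli distributions: let θ ∈ (0,1) and let x ∈ (θ,1). For each n ≥ 1, let P_θ^{⊗n} denote the n-fold product of the Bernoulli distribution with parameter θ on {0,1}^n, and let S_n(ω) = ω₁ + … + ω_n. Then (1/n)·log P_θ^{⊗n}( S_n > n·x ) converges, as n → +∞, to −kl(x,θ). -/
open MeasureTheory Finset Filter
open scoped ENNReal Classical Topology

/-- The Kullback-Leibler divergence between Bernoulli distributions of
parameters `p` and `q`, as a real number (recall `Real.log 0 = 0` in Mathlib,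
which realizes the conventions `0·log 0 = 0` and `0·log(0/0) = 0`). -/
noncomputable def klBin (p q : ℝ) : ℝ :=
  p * Real.log (p / q) + (1 - p) * Real.log ((1 - p) / (1 - q))

/-- The Bernoulli distribution with parameter `θ` on `{0,1}` (here `Bool`,
with `true` playing the role of `1`): mass `θ` on `1` and `1 − θ` on `0`. -/
noncomputable def bernoulliMeas (θ : ℝ) : Measure Bool :=
  ENNReal.ofReal θ • Measure.dirac true + ENNReal.ofReal (1 - θ) • Measure.dirac false

instance bern_fin (θ : ℝ) : IsFiniteMeasure (bernoulliMeas θ) := by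
  constructor
  simp [bernoulliMeas]

lemma bern_singleton (θ : ℝ) (b : Bool) :
    bernoulliMeas θ {b} = ENNReal.ofReal (if b then θ else 1 - θ) := by
  cases b <;> simp [bernoulliMeas, Measure.dirac_apply]

lemma pi_singleton (θ : ℝ) {n : ℕ} (ω : Fin n → Bool) :
    (Measure.pi fun _ : Fin n => bernoulliMeas θ) {ω}
      = ∏ i, ENNReal.ofReal (if ω i then θ else 1 - θ) := by
  rw [← Set.univ_pi_singleton ω, Measure.pi_pi]
  simp [bern_singleton]

lemma measure_toReal (θ : ℝ) (h0 : 0 ≤ θ) (h1 : θ ≤ 1) {n : ℕ}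
    (p : (Fin n → Bool) → Prop) :
    ((Measure.pi fun _ : Fin n => bernoulliMeas θ) {ω | p ω}).toReal
      = ∑ ω ∈ Finset.univ.filter p, ∏ i, (if ω i then θ else 1 - θ) := by
  have hs : {ω | p ω} = ⋃ ω ∈ (Finset.univ.filter p : Finset (Fin n → Bool)),
      ({ω} : Set (Fin n → Bool)) := by
    ext ω; simp
  rw [hs, measure_biUnion_finset]
  · rw [ENNReal.toReal_sum]
    · refine Finset.sum_congr rfl fun ω _ => ?_
      rw [pi_singleton, ← ENNReal.ofReal_prod_of_nonneg, ENNReal.toReal_ofReal]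
      · exact Finset.prod_nonneg fun i _ => by split <;> linarith
      · intro i _; split <;> linarith
    · intro ω _
      rw [pi_singleton]
      exact (ENNReal.prod_lt_top fun i _ => ENNReal.ofReal_lt_top).ne
  · intro a _ b _ hab
    simp [Set.disjoint_singleton, hab]
  · intro ω _; exact MeasurableSet.singleton ω

lemma prod_ite_pow (θ : ℝ) {n : ℕ} (ω : Fin n → Bool) :
    ∏ i, (if ω i then θ else 1 - θ)
      = θ ^ (Finset.univ.filter fun i => ω i = true).card
        * (1 - θ) ^ (n - (Finset.univ.filter fun i => ω i = true).card) := by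
  have h1 : (Finset.univ.filter fun i : Fin n => (ω i : Prop))
      = (Finset.univ.filter fun i => ω i = true) := by
    apply Finset.filter_congr; intro i _; simp
  have hcard := Finset.card_filter_add_card_filter_not
      (s := (Finset.univ : Finset (Fin n))) (p := fun i => (ω i : Prop))
  simp only [Finset.card_univ, Fintype.card_fin] at hcard
  have h2 : (Finset.univ.filter fun i : Fin n => ¬ (ω i : Prop)).card
      = n - (Finset.univ.filter fun i => ω i = true).card := by
    rw [h1] at hcard; omega
  rw [Finset.prod_ite, Finset.prod_const, Finset.prod_const, h1, h2]

lemma card_count (n k : ℕ) :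
    (Finset.univ.filter fun ω : Fin n → Bool =>
        (Finset.univ.filter fun i => ω i = true).card = k).card = n.choose k := by
  have h := Finset.card_powersetCard k (Finset.univ : Finset (Fin n))
  simp only [Finset.card_univ, Fintype.card_fin] at h
  rw [← h]
  refine Finset.card_nbij' (fun ω => Finset.univ.filter fun i => ω i = true)
    (fun s => fun i => i ∈ s) ?_ ?_ ?_ ?_
  · intro ω hω
    simp only [Finset.coe_filter, Finset.mem_coe, Set.mem_setOf_eq, Finset.mem_filter, Finset.mem_univ, true_and] at hω
    simp [Finset.mem_powersetCard, hω]
  · intro s hs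
    simp only [Finset.mem_coe, Finset.mem_powersetCard] at hs
    simp only [Finset.mem_coe, Finset.mem_filter, Finset.mem_univ, true_and]
    have he : (Finset.univ.filter fun i => decide (i ∈ s) = true) = s := by ext i; simp
    rw [he, hs.2]
  · intro ω _; funext i; simp
  · intro s _; ext i; simp

lemma binom_sum (p : ℝ) (n : ℕ) :
    ∑ j ∈ Finset.range (n + 1), (n.choose j : ℝ) * p ^ j * (1 - p) ^ (n - j) = 1 := by
  have h := add_pow p (1 - p) n
  simp only [add_sub_cancel, one_pow] at h
  conv_rhs => rw [h]
  exact Finset.sum_congr rfl fun j _ => by ring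

lemma max_term (n k : ℕ) (hk0 : 0 < k) (hkn : k < n) :
    (1 : ℝ) ≤ ((n : ℝ) + 1) *
      ((n.choose k : ℝ) * ((k : ℝ) / n) ^ k * (1 - (k : ℝ) / n) ^ (n - k)) := by
  have hnn : 0 < n := hk0.trans hkn
  have hn0 : 0 < (n : ℝ) := by exact_mod_cast hnn
  set p : ℝ := (k : ℝ) / n with hp
  have hpn : p * n = (k : ℝ) := by rw [hp]; field_simp
  have h1pn : (1 - p) * n = (n : ℝ) - k := by rw [hp]; field_simp
  have hkr : (k : ℝ) < n := by exact_mod_cast hkn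
  have hkr0 : (0 : ℝ) < k := by exact_mod_cast hk0
  have hp0 : 0 < p := by positivity
  have hp1 : p < 1 := by rw [hp, div_lt_one hn0]; exact hkr
  set t : ℕ → ℝ := fun j => (n.choose j : ℝ) * p ^ j * (1 - p) ^ (n - j) with ht
  have tnn : ∀ j, 0 ≤ t j := by
    intro j
    have : (0:ℝ) ≤ 1 - p := by linarith
    positivity
  have step : ∀ j, j < n →
      t (j + 1) * (((j : ℝ) + 1) * (1 - p)) = t j * (((n : ℝ) - j) * p) := by
    intro j hj
    have hch : (n.choose (j+1) : ℝ) * ((j : ℝ) + 1) = (n.choose j : ℝ) * ((n : ℝ) - j) := by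
      have := Nat.choose_succ_right_eq n j
      have hcast : ((n.choose (j+1) * (j+1) : ℕ) : ℝ) = ((n.choose j * (n - j) : ℕ) : ℝ) := by
        exact_mod_cast congrArg (Nat.cast (R := ℝ)) this
      push_cast [Nat.cast_sub hj.le] at hcast
      linarith [hcast]
    have hexp : (1 - p) ^ (n - j) = (1 - p) ^ (n - (j + 1)) * (1 - p) := by
      rw [← pow_succ]
      congr 1
      omega
    simp only [ht]
    rw [hexp, pow_succ]
    linear_combination (p ^ j * p * (1 - p) ^ (n - (j + 1)) * (1 - p)) * hch
  have up : ∀ j, j + 1 ≤ k → t j ≤ t (j + 1) := by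
    intro j hj
    have hjn : j < n := by omega
    have heq := step j hjn
    have hjr : (j : ℝ) + 1 ≤ k := by exact_mod_cast hj
    have hcd : ((j : ℝ) + 1) * (1 - p) ≤ ((n : ℝ) - j) * p := by
      have h1 : ((j : ℝ) + 1) * ((n : ℝ) - k) ≤ ((n : ℝ) - j) * k := by
        have hjk : (j : ℝ) ≤ k := by linarith
        nlinarith
      have e1 : ((j : ℝ) + 1) * (1 - p) * n = ((j : ℝ) + 1) * ((n : ℝ) - k) := by
        rw [mul_assoc, h1pn]
      have e2 : ((n : ℝ) - j) * p * n = ((n : ℝ) - j) * k := by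
        rw [mul_assoc, hpn]
      nlinarith [h1]
    have hc : 0 < ((j : ℝ) + 1) * (1 - p) := by
      have : (0:ℝ) < 1 - p := by linarith
      positivity
    nlinarith [tnn j, tnn (j+1)]
  have down : ∀ j, k ≤ j → j < n → t (j + 1) ≤ t j := by
    intro j hkj hjn
    have heq := step j hjn
    have hjr : (k : ℝ) ≤ j := by exact_mod_cast hkj
    have hjnr : (j : ℝ) < n := by exact_mod_cast hjn
    have hcd : ((n : ℝ) - j) * p ≤ ((j : ℝ) + 1) * (1 - p) := by
      have h1 : ((n : ℝ) - j) * k ≤ ((j : ℝ) + 1) * ((n : ℝ) - k) := by nlinarith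
      have e1 : ((j : ℝ) + 1) * (1 - p) * n = ((j : ℝ) + 1) * ((n : ℝ) - k) := by
        rw [mul_assoc, h1pn]
      have e2 : ((n : ℝ) - j) * p * n = ((n : ℝ) - j) * k := by
        rw [mul_assoc, hpn]
      nlinarith [h1]
    have hc : 0 < ((j : ℝ) + 1) * (1 - p) := by
      have : (0:ℝ) < 1 - p := by linarith
      positivity
    nlinarith [tnn j, tnn (j+1)]
  have claim1 : ∀ d, d ≤ k → t (k - d) ≤ t k := by
    intro d
    induction d with
    | zero => intro _; simp
    | succ d ih =>
      intro hd
      have h1 : k - (d + 1) + 1 = k - d := by omega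
      have h2 : t (k - (d+1)) ≤ t (k - (d+1) + 1) := up _ (by omega)
      rw [h1] at h2
      exact h2.trans (ih (by omega))
  have claim2 : ∀ d, k + d ≤ n → t (k + d) ≤ t k := by
    intro d
    induction d with
    | zero => intro _; simp
    | succ d ih =>
      intro hd
      have h2 : t (k + d + 1) ≤ t (k + d) := down _ (by omega) (by omega)
      exact (by exact_mod_cast h2 : t (k + (d+1)) ≤ t (k+d)).trans (ih (by omega))
  have le_k : ∀ j, j ≤ n → t j ≤ t k := by
    intro j hj
    by_cases hjk : j ≤ k
    · have : j = k - (k - j) := by omega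
      rw [this]; exact claim1 (k - j) (by omega)
    · have : j = k + (j - k) := by omega
      rw [this]; exact claim2 (j - k) (by omega)
  calc (1 : ℝ) = ∑ j ∈ Finset.range (n + 1), t j := (binom_sum p n).symm
    _ ≤ ∑ _j ∈ Finset.range (n + 1), t k :=
        Finset.sum_le_sum fun j hj => le_k j (by simpa using Nat.lt_succ_iff.mp (Finset.mem_range.mp hj))
    _ = ((n : ℝ) + 1) * t k := by
        rw [Finset.sum_const, Finset.card_range]
        push_cast
        ring

lemma key_ineq (θ x : ℝ) (hθ0 : 0 < θ) (hxθ : θ < x) (hx1 : x < 1)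
    (n c : ℕ) (hcn : c ≤ n) (hc : (n : ℝ) * x < c) :
    θ ^ c * (1 - θ) ^ (n - c)
      ≤ Real.exp (-(n : ℝ) * klBin x θ) * (x ^ c * (1 - x) ^ (n - c)) := by
  have hx0 : 0 < x := hθ0.trans hxθ
  have h1x : 0 < 1 - x := by linarith
  have h1θ : 0 < 1 - θ := by linarith
  have e1 : θ ^ c = Real.exp ((c : ℝ) * Real.log θ) := by
    rw [Real.exp_nat_mul, Real.exp_log hθ0]
  have e2 : (1 - θ) ^ (n - c) = Real.exp (((n - c : ℕ) : ℝ) * Real.log (1 - θ)) := by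
    rw [Real.exp_nat_mul, Real.exp_log h1θ]
  have e3 : x ^ c = Real.exp ((c : ℝ) * Real.log x) := by
    rw [Real.exp_nat_mul, Real.exp_log hx0]
  have e4 : (1 - x) ^ (n - c) = Real.exp (((n - c : ℕ) : ℝ) * Real.log (1 - x)) := by
    rw [Real.exp_nat_mul, Real.exp_log h1x]
  rw [e1, e2, e3, e4, ← Real.exp_add, ← Real.exp_add, ← Real.exp_add]
  apply Real.exp_le_exp.2
  have hnc : ((n - c : ℕ) : ℝ) = (n : ℝ) - c := by
    rw [Nat.cast_sub hcn]
  rw [hnc]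
  have ha : Real.log θ ≤ Real.log x := Real.log_le_log hθ0 hxθ.le
  have hb : Real.log (1 - x) ≤ Real.log (1 - θ) := Real.log_le_log h1x (by linarith)
  have hkl : klBin x θ = x * (Real.log x - Real.log θ)
      + (1 - x) * (Real.log (1 - x) - Real.log (1 - θ)) := by
    rw [klBin, Real.log_div hx0.ne' hθ0.ne', Real.log_div h1x.ne' h1θ.ne']
  rw [hkl]
  nlinarith [mul_nonneg (sub_nonneg.2 (le_of_lt hc))
      (add_nonneg (sub_nonneg.2 ha) (sub_nonneg.2 hb))]

lemma sum_V_one (x : ℝ) (n : ℕ) :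
    ∑ ω : Fin n → Bool, ∏ i, (if ω i then x else 1 - x) = 1 := by
  have h := Finset.prod_univ_sum (fun _ : Fin n => (Finset.univ : Finset Bool))
      (fun _ b => if b then x else 1 - x)
  simp only [Fintype.piFinset_univ] at h
  rw [← h]
  have h1 : ∀ _i : Fin n, (∑ b : Bool, if b then x else 1 - x) = 1 := by
    intro i; simp [Fintype.sum_bool]
  rw [Finset.prod_congr rfl fun i _ => h1 i, Finset.prod_const_one]

lemma exp_neg_kl (θ p : ℝ) (hθ0 : 0 < θ) (hθ1 : θ < 1) (hp0 : 0 < p) (hp1 : p < 1)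
    (n k : ℕ) (hk : k ≤ n) (hpk : p * n = (k : ℝ)) :
    Real.exp (-(n : ℝ) * klBin p θ) = (θ / p) ^ k * ((1 - θ) / (1 - p)) ^ (n - k) := by
  have h1p : 0 < 1 - p := by linarith
  have h1θ : 0 < 1 - θ := by linarith
  have e1 : (θ / p) ^ k = Real.exp ((k : ℝ) * Real.log (θ / p)) := by
    rw [Real.exp_nat_mul, Real.exp_log (by positivity)]
  have e2 : ((1 - θ) / (1 - p)) ^ (n - k)
      = Real.exp (((n - k : ℕ) : ℝ) * Real.log ((1 - θ) / (1 - p))) := by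
    rw [Real.exp_nat_mul, Real.exp_log (by positivity)]
  rw [e1, e2, ← Real.exp_add]
  congr 1
  rw [Nat.cast_sub hk, klBin, Real.log_div hp0.ne' hθ0.ne', Real.log_div h1p.ne' h1θ.ne',
    Real.log_div hθ0.ne' hp0.ne', Real.log_div h1θ.ne' h1p.ne']
  linear_combination (Real.log θ - Real.log p - Real.log (1 - θ) + Real.log (1 - p)) * hpk

lemma log_succ_div_tendsto :
    Tendsto (fun n : ℕ => Real.log ((n : ℝ) + 1) / n) atTop (𝓝 0) := by
  have h1 : Tendsto (fun y : ℝ => Real.log y / y) atTop (𝓝 0) :=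
    Real.isLittleO_log_id_atTop.tendsto_div_nhds_zero
  have h2 : Tendsto (fun n : ℕ => (n : ℝ) + 1) atTop atTop :=
    tendsto_atTop_add_const_right _ 1 tendsto_natCast_atTop_atTop
  have h3 : Tendsto (fun n : ℕ => Real.log ((n : ℝ) + 1) / ((n : ℝ) + 1)) atTop (𝓝 0) :=
    h1.comp h2
  have h4 : Tendsto (fun n : ℕ => ((n : ℝ) + 1) / n) atTop (𝓝 1) := by
    have h5 : Tendsto (fun n : ℕ => 1 + 1 / (n : ℝ)) atTop (𝓝 (1 + 0)) :=
      tendsto_const_nhds.add (tendsto_one_div_atTop_nhds_zero_nat)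
    simp only [add_zero] at h5
    apply h5.congr'
    filter_upwards [eventually_gt_atTop 0] with n hn
    have : (n : ℝ) ≠ 0 := Nat.cast_ne_zero.2 hn.ne'
    field_simp
  have h6 := h3.mul h4
  simp only [mul_one, zero_mul] at h6
  apply h6.congr'
  filter_upwards [eventually_gt_atTop 0] with n hn
  have hn' : (n : ℝ) ≠ 0 := Nat.cast_ne_zero.2 hn.ne'
  have hn1 : (n : ℝ) + 1 ≠ 0 := by positivity
  field_simp

lemma p_tendsto (x : ℝ) (hx0 : 0 ≤ x) :
    Tendsto (fun n : ℕ => ((⌊(n : ℝ) * x⌋₊ + 1 : ℕ) : ℝ) / n) atTop (𝓝 x) := by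
  apply tendsto_of_tendsto_of_tendsto_of_le_of_le'
      (g := fun _ : ℕ => x) (h := fun n : ℕ => x + 2 / n)
      tendsto_const_nhds
  · have h5 : Tendsto (fun n : ℕ => x + 2 / (n : ℝ)) atTop (𝓝 (x + 0)) := by
      apply tendsto_const_nhds.add
      exact tendsto_const_nhds.div_atTop tendsto_natCast_atTop_atTop
    simpa using h5
  · filter_upwards [eventually_gt_atTop 0] with n hn
    have hn0 : (0:ℝ) < n := by exact_mod_cast hn
    have h1 : (n : ℝ) * x < (⌊(n : ℝ) * x⌋₊ + 1 : ℕ) := by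
      push_cast
      exact Nat.lt_floor_add_one _
    calc x = ((n:ℝ) * x) / n := by field_simp
      _ ≤ _ := (div_le_div_iff_of_pos_right hn0).2 h1.le
  · filter_upwards [eventually_gt_atTop 0] with n hn
    have hn0 : (0:ℝ) < n := by exact_mod_cast hn
    have h1 : ((⌊(n : ℝ) * x⌋₊ + 1 : ℕ) : ℝ) ≤ (n : ℝ) * x + 2 := by
      push_cast
      have := Nat.floor_le (by positivity : (0:ℝ) ≤ (n:ℝ) * x)
      linarith
    calc ((⌊(n : ℝ) * x⌋₊ + 1 : ℕ) : ℝ) / n ≤ ((n:ℝ) * x + 2) / n :=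
          (div_le_div_iff_of_pos_right hn0).2 h1
      _ = x + 2 / n := by field_simp

lemma klBin_cont (θ x : ℝ) (hθ0 : 0 < θ) (hθ1 : θ < 1) (hx0 : 0 < x) (hx1 : x < 1) :
    ContinuousAt (fun p => klBin p θ) x := by
  have h1 : (0:ℝ) < 1 - x := by linarith
  have hθ1' : (0:ℝ) < 1 - θ := by linarith
  unfold klBin
  apply ContinuousAt.add
  · exact ContinuousAt.mul continuousAt_id
      (ContinuousAt.log (continuousAt_id.div_const θ) (ne_of_gt (div_pos hx0 hθ0)))
  · exact ContinuousAt.mul (continuousAt_const.sub continuousAt_id)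
      (ContinuousAt.log ((continuousAt_const.sub continuousAt_id).div_const (1 - θ))
        (ne_of_gt (div_pos h1 hθ1')))

/-- Cramér's theorem for Bernoulli distributions: for `θ ∈ (0,1)` and
`x ∈ (θ,1)`, `(1/n)·log P_θ^{⊗n}(S_n > n·x) → −kl(x,θ)` as `n → ∞`, where
`S_n` is the sum of the `n` coordinates. -/
theorem cramer_bernoulli (θ x : ℝ) (hθ : θ ∈ Set.Ioo (0 : ℝ) 1)
    (hx : x ∈ Set.Ioo θ 1) :
    Filter.Tendsto
      (fun n : ℕ =>
        (1 / n : ℝ) *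
          Real.log
            ((Measure.pi fun _ : Fin n => bernoulliMeas θ)
              {ω : Fin n → Bool |
                (n : ℝ) * x < ∑ i, (if ω i then (1 : ℝ) else 0)}).toReal)
      Filter.atTop (nhds (-klBin x θ)) := by
  obtain ⟨hθ0, hθ1⟩ := hθ
  obtain ⟨hxθ, hx1⟩ := hx
  have hx0 : 0 < x := hθ0.trans hxθ
  have h1x : (0:ℝ) < 1 - x := by linarith
  have h1θ : (0:ℝ) < 1 - θ := by linarith
  -- number of successes, threshold index
  set c : ∀ n : ℕ, (Fin n → Bool) → ℕ :=
    fun n ω => (Finset.univ.filter fun i => ω i = true).card with hcdef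
  set k : ℕ → ℕ := fun n => ⌊(n : ℝ) * x⌋₊ + 1 with hkdef
  -- the probability as a finite sum
  have hPsum : ∀ n : ℕ,
      ((Measure.pi fun _ : Fin n => bernoulliMeas θ)
          {ω : Fin n → Bool | (n : ℝ) * x < ∑ i, (if ω i then (1 : ℝ) else 0)}).toReal
        = ∑ ω ∈ Finset.univ.filter
            (fun ω : Fin n → Bool => (n : ℝ) * x < (c n ω : ℝ)),
            θ ^ (c n ω) * (1 - θ) ^ (n - c n ω) := by
    intro n
    rw [measure_toReal θ hθ0.le hθ1.le]
    have hpred : (Finset.univ.filter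
          (fun ω : Fin n → Bool => (n : ℝ) * x < ∑ i, (if ω i then (1 : ℝ) else 0)))
        = Finset.univ.filter (fun ω : Fin n → Bool => (n : ℝ) * x < (c n ω : ℝ)) := by
      apply Finset.filter_congr
      intro ω _
      rw [Finset.sum_boole]
    rw [hpred]
    exact Finset.sum_congr rfl fun ω _ => prod_ite_pow θ ω
  -- pointwise bounds
  have cle : ∀ (n : ℕ) (ω : Fin n → Bool), c n ω ≤ n := by
    intro n ω
    simpa [hcdef] using (Finset.card_filter_le Finset.univ (fun i => ω i = true))
  have hupper : ∀ n : ℕ,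
      (∑ ω ∈ Finset.univ.filter
          (fun ω : Fin n → Bool => (n : ℝ) * x < (c n ω : ℝ)),
          θ ^ (c n ω) * (1 - θ) ^ (n - c n ω))
        ≤ Real.exp (-(n : ℝ) * klBin x θ) := by
    intro n
    calc (∑ ω ∈ Finset.univ.filter
            (fun ω : Fin n → Bool => (n : ℝ) * x < (c n ω : ℝ)),
            θ ^ (c n ω) * (1 - θ) ^ (n - c n ω))
        ≤ ∑ ω ∈ Finset.univ.filter
            (fun ω : Fin n → Bool => (n : ℝ) * x < (c n ω : ℝ)),
            Real.exp (-(n : ℝ) * klBin x θ) * (x ^ (c n ω) * (1 - x) ^ (n - c n ω)) := by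
          apply Finset.sum_le_sum
          intro ω hω
          have hmem := (Finset.mem_filter.mp hω).2
          exact key_ineq θ x hθ0 hxθ hx1 n (c n ω) (cle n ω) hmem
      _ = Real.exp (-(n : ℝ) * klBin x θ) * ∑ ω ∈ Finset.univ.filter
            (fun ω : Fin n → Bool => (n : ℝ) * x < (c n ω : ℝ)),
            (x ^ (c n ω) * (1 - x) ^ (n - c n ω)) := by rw [Finset.mul_sum]
      _ ≤ Real.exp (-(n : ℝ) * klBin x θ) * ∑ ω : Fin n → Bool,
            (x ^ (c n ω) * (1 - x) ^ (n - c n ω)) := by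
          apply mul_le_mul_of_nonneg_left _ (Real.exp_nonneg _)
          apply Finset.sum_le_sum_of_subset_of_nonneg (Finset.filter_subset _ _)
          intro ω _ _
          positivity
      _ = Real.exp (-(n : ℝ) * klBin x θ) := by
          rw [show (∑ ω : Fin n → Bool, (x ^ (c n ω) * (1 - x) ^ (n - c n ω)))
              = ∑ ω : Fin n → Bool, ∏ i, (if ω i then x else 1 - x) from
            Finset.sum_congr rfl fun ω _ => (prod_ite_pow x ω).symm, sum_V_one, mul_one]
  have hlower : ∀ n : ℕ, k n ≤ n →
      (n.choose (k n) : ℝ) * θ ^ (k n) * (1 - θ) ^ (n - k n)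
        ≤ ∑ ω ∈ Finset.univ.filter
            (fun ω : Fin n → Bool => (n : ℝ) * x < (c n ω : ℝ)),
            θ ^ (c n ω) * (1 - θ) ^ (n - c n ω) := by
    intro n hkn
    have hsub : (Finset.univ.filter fun ω : Fin n → Bool => c n ω = k n)
        ⊆ Finset.univ.filter (fun ω : Fin n → Bool => (n : ℝ) * x < (c n ω : ℝ)) := by
      intro ω hω
      have h1 := (Finset.mem_filter.mp hω).2
      refine Finset.mem_filter.mpr ⟨Finset.mem_univ _, ?_⟩
      rw [h1]
      simp only [hkdef]
      push_cast
      exact Nat.lt_floor_add_one _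
    calc (n.choose (k n) : ℝ) * θ ^ (k n) * (1 - θ) ^ (n - k n)
        = ∑ ω ∈ Finset.univ.filter (fun ω : Fin n → Bool => c n ω = k n),
            θ ^ (c n ω) * (1 - θ) ^ (n - c n ω) := by
          rw [Finset.sum_congr rfl (fun ω hω => by
            rw [(Finset.mem_filter.mp hω).2]), Finset.sum_const]
          rw [show (Finset.univ.filter fun ω : Fin n → Bool => c n ω = k n).card
              = n.choose (k n) from card_count n (k n)]
          rw [nsmul_eq_mul]
          ring
      _ ≤ _ := by
          apply Finset.sum_le_sum_of_subset_of_nonneg hsub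
          intro ω _ _
          positivity
  -- positivity and the two eventual bounds
  have hgood : ∀ᶠ n : ℕ in atTop, 0 < n ∧ (n : ℝ) * x + 2 ≤ n := by
    have ht : Tendsto (fun n : ℕ => (n : ℝ) * (1 - x)) atTop atTop :=
      Tendsto.atTop_mul_const h1x tendsto_natCast_atTop_atTop
    filter_upwards [eventually_gt_atTop 0, ht.eventually_ge_atTop 2] with n h1 h2
    refine ⟨h1, by nlinarith⟩
  have hk_lt : ∀ n : ℕ, 0 < n → (n : ℝ) * x + 2 ≤ n → k n < n := by
    intro n _ h2
    have h3 : ((k n : ℕ) : ℝ) ≤ (n : ℝ) * x + 1 := by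
      simp only [hkdef]
      push_cast
      have := Nat.floor_le (by positivity : (0:ℝ) ≤ (n:ℝ) * x)
      linarith
    have : ((k n : ℕ) : ℝ) < n := by linarith
    exact_mod_cast this
  have hPpos : ∀ n : ℕ, k n ≤ n →
      0 < ∑ ω ∈ Finset.univ.filter
          (fun ω : Fin n → Bool => (n : ℝ) * x < (c n ω : ℝ)),
          θ ^ (c n ω) * (1 - θ) ^ (n - c n ω) := by
    intro n hkn
    have h1 : (0:ℝ) < (n.choose (k n) : ℝ) * θ ^ (k n) * (1 - θ) ^ (n - k n) := by
      have := Nat.choose_pos hkn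
      have h2 : (0:ℝ) < (n.choose (k n) : ℝ) := by exact_mod_cast this
      positivity
    exact h1.trans_le (hlower n hkn)
  -- auxiliary sequence for the lower bound
  set a : ℕ → ℝ := fun n => -(klBin (((k n : ℕ) : ℝ) / n) θ) - Real.log ((n : ℝ) + 1) / n
    with hadef
  have ha : Tendsto a atTop (𝓝 (-klBin x θ)) := by
    have h1 : Tendsto (fun n : ℕ => klBin (((k n : ℕ) : ℝ) / n) θ) atTop (𝓝 (klBin x θ)) := by
      exact (klBin_cont θ x hθ0 hθ1 hx0 hx1).tendsto.comp (p_tendsto x hx0.le)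
    have h2 := (h1.neg).sub log_succ_div_tendsto
    simpa using h2
  -- conclude by squeezing
  apply tendsto_of_tendsto_of_tendsto_of_le_of_le' ha tendsto_const_nhds
  · -- lower bound : a n ≤ (1/n) log P n eventually
    filter_upwards [hgood] with n hn
    obtain ⟨hn0, hn2⟩ := hn
    have hknlt : k n < n := hk_lt n hn0 hn2
    have hkn : k n ≤ n := hknlt.le
    have hk0 : 0 < k n := by simp [hkdef]
    have hnr : (0:ℝ) < n := by exact_mod_cast hn0
    set p : ℝ := ((k n : ℕ) : ℝ) / n with hpdef
    have hp0 : 0 < p := by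
      have : (0:ℝ) < ((k n : ℕ) : ℝ) := by exact_mod_cast hk0
      positivity
    have hp1 : p < 1 := by
      rw [hpdef, div_lt_one hnr]
      exact_mod_cast hknlt
    have hpk : p * n = ((k n : ℕ) : ℝ) := by rw [hpdef]; field_simp
    have hmax := max_term n (k n) hk0 hknlt
    have hexp := exp_neg_kl θ p hθ0 hθ1 hp0 hp1 n (k n) hkn hpk
    -- (n+1)⁻¹ * exp(-n klBin p θ) ≤ choose * θ^k (1-θ)^{n-k}
    have hstep : ((n : ℝ) + 1)⁻¹ * Real.exp (-(n : ℝ) * klBin p θ)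
        ≤ (n.choose (k n) : ℝ) * θ ^ (k n) * (1 - θ) ^ (n - k n) := by
      rw [hexp]
      have hfac : (θ / p) ^ (k n) * ((1 - θ) / (1 - p)) ^ (n - k n)
          = (θ ^ (k n) * (1 - θ) ^ (n - k n)) / (p ^ (k n) * (1 - p) ^ (n - k n)) := by
        rw [div_pow θ p, div_pow (1 - θ) (1 - p)]
        rw [div_mul_div_comm]
      have hq : (0:ℝ) < p ^ (k n) * (1 - p) ^ (n - k n) := by
        have : (0:ℝ) < 1 - p := by linarith
        positivity
      rw [hfac]
      rw [inv_mul_le_iff₀ (by positivity : (0:ℝ) < (n:ℝ) + 1), div_le_iff₀ hq]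
      -- goal: θ^k (1-θ)^{n-k} ≤ ((n+1) * (choose θ^k (1-θ)^{n-k})) * (p^k (1-p)^{n-k})
      have h1 : (1:ℝ) * (θ ^ (k n) * (1 - θ) ^ (n - k n))
          ≤ (((n : ℝ) + 1) * ((n.choose (k n) : ℝ) * p ^ (k n) * (1 - p) ^ (n - k n)))
            * (θ ^ (k n) * (1 - θ) ^ (n - k n)) := by
        apply mul_le_mul_of_nonneg_right _ (by positivity)
        simpa [hpdef] using hmax
      calc θ ^ (k n) * (1 - θ) ^ (n - k n)
          = (1:ℝ) * (θ ^ (k n) * (1 - θ) ^ (n - k n)) := by ring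
        _ ≤ _ := h1
        _ = ((n : ℝ) + 1) * ((n.choose (k n) : ℝ) * θ ^ (k n) * (1 - θ) ^ (n - k n))
              * (p ^ (k n) * (1 - p) ^ (n - k n)) := by ring
    have hP := (hstep.trans (hlower n hkn))
    -- take logs
    have hlhs_pos : (0:ℝ) < ((n : ℝ) + 1)⁻¹ * Real.exp (-(n : ℝ) * klBin p θ) := by
      positivity
    have hlog := Real.log_le_log hlhs_pos hP
    rw [Real.log_mul (by positivity) (Real.exp_ne_zero _), Real.log_inv,
      Real.log_exp] at hlog
    -- divide by n
    rw [hPsum n]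
    have h2 : a n = (1 / (n:ℝ)) * (-Real.log ((n : ℝ) + 1) + -(n : ℝ) * klBin p θ) := by
      rw [hadef]
      field_simp
      ring
    rw [h2]
    apply mul_le_mul_of_nonneg_left hlog (by positivity)
  · -- upper bound : (1/n) log P n ≤ -klBin x θ eventually
    filter_upwards [hgood] with n hn
    obtain ⟨hn0, hn2⟩ := hn
    have hknlt : k n < n := hk_lt n hn0 hn2
    have hnr : (0:ℝ) < n := by exact_mod_cast hn0
    rw [hPsum n]
    have hpos := hPpos n hknlt.le
    have hlog := Real.log_le_log hpos (hupper n)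
    rw [Real.log_exp] at hlog
    calc (1 / (n:ℝ)) * Real.log (∑ ω ∈ Finset.univ.filter
            (fun ω : Fin n → Bool => (n : ℝ) * x < (c n ω : ℝ)),
            θ ^ (c n ω) * (1 - θ) ^ (n - c n ω))
        ≤ (1 / (n:ℝ)) * (-(n : ℝ) * klBin x θ) :=
          mul_le_mul_of_nonneg_left hlog (by positivity)
      _ = -klBin x θ := by field_simp
end

section
/- Birgé's lemma: let N ≥ 2, let P₁,…,P_N be probability measures on a common measurable space (Ω, F), and let A₁,…,A_N be pairwise disjoint events whose union is Ω. Let c ∈ (0,1) satisfy −(c·log c + (1−c)·log(1−c))/c + log(1−c) = log((N−1)/N) (such a c exists and is unique, and c ≥ 1/2). Then min_{1≤i≤N} Pᵢ(Aᵢ) ≤ max{ c, K̄ / log N }, where K̄ = (1/(N−1))·Σ_{i=2}^{N} KL(Pᵢ, P₁), and where the bound is trivially satisfied if K̄ = +∞. -/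
open MeasureTheory
open scoped ENNReal Classical

/-- The Kullback-Leibler divergence between two measures, with value `+∞`
when `P` is not absolutely continuous w.r.t. `Q` or when the log-likelihood
ratio is not integrable. -/
noncomputable def KLdiv {Ω : Type*} [MeasurableSpace Ω] (P Q : Measure Ω) : ℝ≥0∞ :=
  if P ≪ Q ∧ Integrable (fun ω => Real.log (P.rnDeriv Q ω).toReal) P
  then ENNReal.ofReal (∫ ω, Real.log (P.rnDeriv Q ω).toReal ∂P)
  else ⊤

section BirgeAux

open Real Set

/-- Partial Jensen / data-processing bound on one set. -/
lemma birge_jensen_set {Ω : Type*} [MeasurableSpace Ω] (P Q : Measure Ω)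
    [IsProbabilityMeasure P] [IsProbabilityMeasure Q]
    (hPQ : P ≪ Q) (hint : Integrable (llr P Q) P)
    {B : Set Ω} (hB : MeasurableSet B) :
    (P B).toReal * Real.log ((P B).toReal / (Q B).toReal) ≤ ∫ x in B, llr P Q x ∂P := by
  by_cases hQB : Q B = 0
  · have hPB : P B = 0 := hPQ hQB
    have : P.restrict B = 0 := Measure.restrict_eq_zero.mpr hPB
    simp [hPB, this]
  · have hqpos : 0 < (Q B).toReal := ENNReal.toReal_pos hQB (measure_ne_top _ _)
    haveI : NeZero (Q.restrict B) := by
      refine ⟨fun h => hQB ?_⟩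
      have := congrArg (fun m : Measure Ω => m Set.univ) h
      simpa [Measure.restrict_apply_univ] using this
    have hgi : Integrable (fun x => (P.rnDeriv Q x).toReal * Real.log (P.rnDeriv Q x).toReal)
        (Q.restrict B) := by
      have : Integrable (fun x => (P.rnDeriv Q x).toReal • llr P Q x) Q :=
        (integrable_rnDeriv_smul_iff hPQ).mpr hint
      simpa [llr_def, smul_eq_mul] using this.restrict
    have hfi : Integrable (fun x => (P.rnDeriv Q x).toReal) (Q.restrict B) :=
      Measure.integrable_toReal_rnDeriv.restrict
    have hJ := Real.convexOn_mul_log.map_average_le Real.continuous_mul_log.continuousOn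
      isClosed_Ici (μ := Q.restrict B) (f := fun x => (P.rnDeriv Q x).toReal)
      (Filter.Eventually.of_forall fun x => ENNReal.toReal_nonneg) hfi hgi
    have hIq : ∫ x in B, (P.rnDeriv Q x).toReal ∂Q = (P B).toReal :=
      Measure.setIntegral_toReal_rnDeriv hPQ B
    have hchg : ∫ x in B, (P.rnDeriv Q x).toReal * Real.log (P.rnDeriv Q x).toReal ∂Q
        = ∫ x in B, llr P Q x ∂P := by
      have := setIntegral_rnDeriv_smul hPQ hB (f := llr P Q)
      simpa [llr_def, smul_eq_mul] using this
    rw [average_eq, average_eq, measureReal_restrict_apply_univ, hIq, hchg, smul_eq_mul,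
      smul_eq_mul] at hJ
    have h2 := mul_le_mul_of_nonneg_left hJ hqpos.le
    calc (P B).toReal * Real.log ((P B).toReal / (Q B).toReal)
        = (Q B).toReal * (((Q B).toReal⁻¹ * (P B).toReal) *
            Real.log ((Q B).toReal⁻¹ * (P B).toReal)) := by
          field_simp
          try ring_nf
      _ ≤ (Q B).toReal * ((Q B).toReal⁻¹ * ∫ x in B, llr P Q x ∂P) := h2
      _ = ∫ x in B, llr P Q x ∂P := by field_simp

lemma birge_prob_compl_toReal {Ω : Type*} [MeasurableSpace Ω] (P : Measure Ω)
    [IsProbabilityMeasure P] {B : Set Ω} (hB : MeasurableSet B) :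
    (P Bᶜ).toReal = 1 - (P B).toReal := by
  rw [measure_compl hB (measure_ne_top _ _), measure_univ,
    ENNReal.toReal_sub_of_le prob_le_one ENNReal.one_ne_top, ENNReal.toReal_one]

/-- Binary data-processing inequality. -/
lemma birge_kl_binary {Ω : Type*} [MeasurableSpace Ω] (P Q : Measure Ω)
    [IsProbabilityMeasure P] [IsProbabilityMeasure Q]
    (hPQ : P ≪ Q) (hint : Integrable (llr P Q) P)
    {B : Set Ω} (hB : MeasurableSet B) :
    (P B).toReal * Real.log ((P B).toReal / (Q B).toReal)
      + (1 - (P B).toReal) * Real.log ((1 - (P B).toReal) / (1 - (Q B).toReal))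
      ≤ ∫ x, llr P Q x ∂P := by
  have h1 := birge_jensen_set P Q hPQ hint hB
  have h2 := birge_jensen_set P Q hPQ hint hB.compl
  rw [birge_prob_compl_toReal P hB, birge_prob_compl_toReal Q hB] at h2
  have := integral_add_compl hB hint
  linarith [h1, h2, this.ge, this.le]

/-- Binary entropy. -/
noncomputable def Hb (x : ℝ) : ℝ := -(x * Real.log x + (1 - x) * Real.log (1 - x))

lemma hasDerivAt_Hb {x : ℝ} (hx0 : x ≠ 0) (hx1 : x ≠ 1) :
    HasDerivAt Hb (Real.log (1 - x) - Real.log x) x := by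
  have h1 : HasDerivAt (fun y : ℝ => y * Real.log y) (Real.log x + 1) x :=
    Real.hasDerivAt_mul_log hx0
  have h2 : HasDerivAt (fun y : ℝ => (1 - y) * Real.log (1 - y))
      (-(Real.log (1 - x) + 1)) x := by
    have hinner : HasDerivAt (fun y : ℝ => 1 - y) (-1) x := by
      simpa using (hasDerivAt_id x).const_sub 1
    have houter : HasDerivAt (fun y : ℝ => y * Real.log y) (Real.log (1 - x) + 1) (1 - x) :=
      Real.hasDerivAt_mul_log (by intro h; apply hx1; linarith [sub_eq_zero.mp h])
    simpa [mul_comm, Function.comp_def] using houter.comp x hinner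
  have := (h1.add h2).neg
  refine HasDerivAt.congr_deriv (f := Hb) this ?_
  ring

lemma Hb_antitoneOn : AntitoneOn Hb (Icc (1/2 : ℝ) 1) := by
  have hcont : Continuous Hb := by
    have := Real.continuous_mul_log
    unfold Hb
    fun_prop
  apply antitoneOn_of_deriv_nonpos (convex_Icc _ _) hcont.continuousOn
  · intro x hx
    rw [interior_Icc] at hx
    exact (hasDerivAt_Hb (by linarith [hx.1])
      (ne_of_lt hx.2)).differentiableAt.differentiableWithinAt
  · intro x hx
    rw [interior_Icc] at hx
    rw [(hasDerivAt_Hb (by linarith [hx.1]) (ne_of_lt hx.2)).deriv]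
    have : Real.log (1 - x) ≤ Real.log x :=
      Real.log_le_log (by linarith [hx.2]) (by linarith [hx.1])
    linarith

/-- The function appearing in the defining equation for the constant `c`. -/
noncomputable def Gb (x : ℝ) : ℝ := Hb x / x + Real.log (1 - x)

lemma Gb_antitoneOn : AntitoneOn Gb (Ioo (0:ℝ) 1) := by
  have hderiv : ∀ x ∈ Ioo (0:ℝ) 1,
      HasDerivAt Gb (Real.log (1 - x) / x ^ 2 - (1 - x)⁻¹) x := fun x hx => by
    have hx0 : x ≠ 0 := ne_of_gt hx.1
    have hx1' : (0:ℝ) < 1 - x := by linarith [hx.2]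
    have hx1 : x ≠ 1 := ne_of_lt hx.2
    have h1 : HasDerivAt (fun y => Hb y / y)
        (((Real.log (1 - x) - Real.log x) * x - Hb x * 1) / x ^ 2) x :=
      (hasDerivAt_Hb hx0 hx1).div (hasDerivAt_id x) hx0
    have h2 : HasDerivAt (fun y : ℝ => Real.log (1 - y)) (-(1 - x)⁻¹) x := by
      have hinner : HasDerivAt (fun y : ℝ => 1 - y) (-1) x := by
        simpa using (hasDerivAt_id x).const_sub 1
      simpa [Function.comp_def] using (Real.hasDerivAt_log (ne_of_gt hx1')).comp x hinner
    have := h1.add h2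
    refine HasDerivAt.congr_deriv (f := Gb) this ?_
    have hHb : Hb x = -(x * Real.log x + (1 - x) * Real.log (1 - x)) := rfl
    rw [hHb]
    field_simp
    ring
  apply antitoneOn_of_deriv_nonpos (convex_Ioo _ _)
  · exact fun x hx => ((hderiv x hx).differentiableAt.continuousAt).continuousWithinAt
  · intro x hx
    rw [interior_Ioo] at hx
    exact (hderiv x hx).differentiableAt.differentiableWithinAt
  · intro x hx
    rw [interior_Ioo] at hx
    rw [(hderiv x hx).deriv]
    have h1 : Real.log (1 - x) ≤ 0 := Real.log_nonpos (by linarith [hx.2]) (by linarith [hx.1])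
    have h2 : (0:ℝ) < 1 - x := by linarith [hx.2]
    have h3 : (0:ℝ) < x ^ 2 := pow_pos hx.1 2
    have h4 : Real.log (1 - x) / x ^ 2 ≤ 0 := div_nonpos_of_nonpos_of_nonneg h1 h3.le
    have h5 : (0:ℝ) ≤ (1 - x)⁻¹ := by positivity
    linarith

lemma Gb_pos {x : ℝ} (hx0 : 0 < x) (hx2 : x ≤ 1/2) : 0 < Gb x := by
  have hx1 : x < 1 := by linarith
  have hGx : Gb x = -Real.log x + ((2*x - 1)/x) * Real.log (1 - x) := by
    unfold Gb Hb
    field_simp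
    ring
  have h1 : Real.log x < 0 := Real.log_neg hx0 (by linarith)
  have h2 : Real.log (1 - x) ≤ 0 := Real.log_nonpos (by linarith) (by linarith)
  have h3 : (2*x - 1)/x ≤ 0 := div_nonpos_of_nonpos_of_nonneg (by linarith) hx0.le
  nlinarith [mul_nonneg (neg_nonneg.mpr h3) (neg_nonneg.mpr h2)]

lemma birge_real_bound {a p q : ℝ} (ha2 : 1/2 ≤ a) (hap : a ≤ p) (hp1 : p ≤ 1)
    (hq : 0 < q) (hq1 : q ≤ 1) :
    a * (-Real.log q) - Hb a ≤ p * Real.log (p / q) + (1 - p) * Real.log ((1 - p) / (1 - q)) := by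
  have hp0 : 0 < p := lt_of_lt_of_le (by linarith) hap
  have hlq : Real.log q ≤ 0 := Real.log_nonpos hq.le hq1
  have e1 : p * Real.log (p / q) = p * Real.log p - p * Real.log q := by
    rw [Real.log_div (ne_of_gt hp0) (ne_of_gt hq)]; ring
  have e2 : (1 - p) * Real.log (1 - p) ≤ (1 - p) * Real.log ((1 - p) / (1 - q)) := by
    rcases eq_or_lt_of_le hp1 with hp1' | hp1'
    · simp [← hp1']
    · have h1p : (0:ℝ) < 1 - p := by linarith
      rcases eq_or_lt_of_le hq1 with hq1' | hq1'
      · rw [hq1']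
        simp only [sub_self, div_zero, Real.log_zero, mul_zero]
        exact mul_nonpos_of_nonneg_of_nonpos h1p.le (Real.log_nonpos (by linarith) (by linarith))
      · have h1q : (0:ℝ) < 1 - q := by linarith
        have : 1 - p ≤ (1 - p) / (1 - q) := by
          rw [le_div_iff₀ h1q]; nlinarith
        exact mul_le_mul_of_nonneg_left (Real.log_le_log h1p this) h1p.le
  have e3 : Hb p ≤ Hb a :=
    Hb_antitoneOn ⟨ha2, by linarith⟩ ⟨by linarith, hp1⟩ hap
  have e4 : a * (-Real.log q) ≤ p * (-Real.log q) :=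
    mul_le_mul_of_nonneg_right hap (by linarith)
  have hHp : Hb p = -(p * Real.log p + (1 - p) * Real.log (1 - p)) := rfl
  have hHa : Hb a = -(a * Real.log a + (1 - a) * Real.log (1 - a)) := rfl
  nlinarith [e2, e3, e4]

lemma birge_log_sum_jensen {n : ℕ} (hn : 0 < n) {ι : Type*} (t : Finset ι)
    (hcard : t.card = n) (q : ι → ℝ) (hq : ∀ i ∈ t, 0 < q i) :
    ∑ i ∈ t, Real.log (q i) ≤ (n : ℝ) * Real.log ((∑ i ∈ t, q i) / n) := by
  have hn' : (0:ℝ) < n := Nat.cast_pos.mpr hn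
  have hJ := strictConcaveOn_log_Ioi.concaveOn.le_map_sum
    (t := t) (w := fun _ => (n : ℝ)⁻¹) (p := q)
    (fun i _ => by positivity)
    (by rw [Finset.sum_const, hcard, nsmul_eq_mul]; field_simp)
    (fun i hi => hq i hi)
  simp only [smul_eq_mul] at hJ
  rw [← Finset.mul_sum] at hJ
  have := mul_le_mul_of_nonneg_left hJ hn'.le
  rw [← Finset.mul_sum, ← mul_assoc, mul_inv_cancel₀ (ne_of_gt hn'), one_mul] at this
  rw [inv_mul_eq_div] at this
  exact this

lemma birge_ofReal_sum_le {ι : Type*} (t : Finset ι) (f : ι → ℝ) :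
    ENNReal.ofReal (∑ i ∈ t, f i) ≤ ∑ i ∈ t, ENNReal.ofReal (f i) := by
  classical
  induction t using Finset.induction with
  | empty => simp
  | insert _ _ hnotmem ih =>
    rw [Finset.sum_insert hnotmem, Finset.sum_insert hnotmem]
    exact le_trans (ENNReal.ofReal_add_le) (add_le_add_right ih _)

end BirgeAux

set_option maxHeartbeats 2000000 in
/-- Birgé's lemma: for a partition `A₁,…,A_N` and probability measures
`P₁,…,P_N` (indexed here by `Fin N`, with `P 0` playing the role of `P₁`),
`min_i Pᵢ(Aᵢ) ≤ max{c, K̄/log N}` where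
`K̄ = (1/(N−1))·Σ_{i≠1} KL(Pᵢ,P₁)` and `c` is the constant determined by the
stated equation. The inequality is stated in `[0,+∞]`, so that it is trivially
satisfied when `K̄ = +∞`. -/
theorem birge_lemma {Ω : Type*} [MeasurableSpace Ω] (N : ℕ) (hN : 2 ≤ N)
    (P : Fin N → Measure Ω) [∀ i, IsProbabilityMeasure (P i)]
    (A : Fin N → Set Ω) (hA : ∀ i, MeasurableSet (A i))
    (hdisj : Pairwise (Function.onFun Disjoint A))
    (hcover : (⋃ i, A i) = Set.univ)
    (c : ℝ) (hc : c ∈ Set.Ioo (0 : ℝ) 1)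
    (hceq : -(c * Real.log c + (1 - c) * Real.log (1 - c)) / c + Real.log (1 - c)
      = Real.log ((N - 1 : ℝ) / N)) :
    (⨅ i, P i (A i)) ≤
      max (ENNReal.ofReal c)
        ((ENNReal.ofReal (1 / (N - 1 : ℝ)) *
            ∑ i ∈ Finset.univ.filter (fun i : Fin N => i ≠ ⟨0, by omega⟩), KLdiv (P i) (P ⟨0, by omega⟩)) /
          ENNReal.ofReal (Real.log N)) := by
  suffices H : ∀ i₀ : Fin N, i₀ = ⟨0, by omega⟩ →
      (⨅ i, P i (A i)) ≤
        max (ENNReal.ofReal c)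
          ((ENNReal.ofReal (1 / (N - 1 : ℝ)) *
              ∑ i ∈ Finset.univ.filter (fun i : Fin N => i ≠ i₀), KLdiv (P i) (P i₀)) /
            ENNReal.ofReal (Real.log N)) by
    exact H _ rfl
  intro i₀ hi₀
  haveI : Nonempty (Fin N) := ⟨i₀⟩
  have hN2 : (2:ℝ) ≤ (N:ℝ) := by exact_mod_cast hN
  have hN1 : (1:ℝ) ≤ (N:ℝ) - 1 := by linarith
  set T : Finset (Fin N) := Finset.univ.filter (fun i : Fin N => i ≠ i₀) with hT
  obtain ⟨j, hj⟩ := Finite.exists_min (fun i : Fin N => P i (A i))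
  by_cases hcase : P j (A j) ≤ ENNReal.ofReal c
  · exact le_trans (le_trans (iInf_le _ j) hcase) (le_max_left _ _)
  push_neg at hcase
  by_cases htop : ∀ i ∈ T, KLdiv (P i) (P i₀) ≠ ⊤
  swap
  · push_neg at htop
    obtain ⟨i, hiT, hi⟩ := htop
    have hsum : ∑ i ∈ T, KLdiv (P i) (P i₀) = ⊤ := ENNReal.sum_eq_top.mpr ⟨i, hiT, hi⟩
    have h1 : ENNReal.ofReal (1/((N:ℝ)-1)) ≠ 0 := by
      rw [Ne, ENNReal.ofReal_eq_zero]
      push_neg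
      positivity
    rw [hsum, ENNReal.mul_top h1, ENNReal.top_div_of_ne_top ENNReal.ofReal_ne_top]
    exact le_trans le_top (le_max_right _ _)
  -- main case : all KL divergences finite
  have hKL : ∀ i ∈ T, (P i ≪ P i₀ ∧ Integrable (llr (P i) (P i₀)) (P i)) ∧
      KLdiv (P i) (P i₀) = ENNReal.ofReal (∫ x, llr (P i) (P i₀) x ∂(P i)) := by
    intro i hi
    have h := htop i hi
    unfold KLdiv at h ⊢
    split_ifs at h ⊢ with hcond
    · exact ⟨hcond, rfl⟩
    · exact absurd rfl h
  set a : ℝ := (P j (A j)).toReal with ha_def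
  have hca : c < a := by
    rw [ha_def, ← ENNReal.ofReal_lt_iff_lt_toReal hc.1.le (measure_ne_top _ _)]
    exact hcase
  have ha_le : ∀ i, a ≤ (P i (A i)).toReal := fun i =>
    (ENNReal.toReal_le_toReal (measure_ne_top _ _) (measure_ne_top _ _)).mpr (hj i)
  have hp1 : ∀ i : Fin N, (P i (A i)).toReal ≤ 1 := fun i => by
    have : P i (A i) ≤ 1 := prob_le_one
    simpa using ENNReal.toReal_mono ENNReal.one_ne_top this
  -- c > 1/2
  have hGc : Gb c = Real.log (((N:ℝ) - 1) / N) := hceq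
  have hlogfrac_neg : Real.log (((N:ℝ) - 1) / N) < 0 := by
    apply Real.log_neg
    · positivity
    · rw [div_lt_one (by positivity)]; linarith
  have hc12 : 1/2 < c := by
    by_contra hcon
    push_neg at hcon
    have := Gb_pos hc.1 hcon
    rw [hGc] at this
    linarith
  have ha12 : 1/2 ≤ a := by linarith
  have ha0 : 0 < a := by linarith
  -- q facts
  have hq_pos : ∀ i ∈ T, 0 < (P i₀ (A i)).toReal := by
    intro i hi
    apply ENNReal.toReal_pos _ (measure_ne_top _ _)
    intro h0
    have hzero : P i (A i) = 0 := (hKL i hi).1.1 h0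
    have := ha_le i
    rw [hzero] at this
    simp only [ENNReal.toReal_zero] at this
    linarith
  have hq1 : ∀ i : Fin N, (P i₀ (A i)).toReal ≤ 1 := fun i => by
    have : P i₀ (A i) ≤ 1 := prob_le_one
    simpa using ENNReal.toReal_mono ENNReal.one_ne_top this
  -- sum of q over univ is 1
  have hsum1 : ∑ i, P i₀ (A i) = 1 := by
    rw [← tsum_fintype (L := SummationFilter.unconditional _), ← measure_iUnion hdisj hA, hcover, measure_univ]
  have hsumq : ∑ i, (P i₀ (A i)).toReal = 1 := by
    rw [← ENNReal.toReal_sum (fun i _ => measure_ne_top _ _), hsum1, ENNReal.toReal_one]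
  have hTerase : T = Finset.univ.erase i₀ := by
    rw [hT]; exact Finset.filter_ne' _ _
  have hcardT : T.card = N - 1 := by
    rw [hTerase, Finset.card_erase_of_mem (Finset.mem_univ _), Finset.card_univ,
      Fintype.card_fin]
  have hcast : ((N - 1 : ℕ) : ℝ) = (N:ℝ) - 1 := by
    rw [Nat.cast_sub (by omega), Nat.cast_one]
  set S : ℝ := ∑ i ∈ T, (P i₀ (A i)).toReal with hS_def
  have hS_eq : S = 1 - (P i₀ (A i₀)).toReal := by
    have h := Finset.add_sum_erase Finset.univ (fun i => (P i₀ (A i)).toReal)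
      (Finset.mem_univ i₀)
    rw [hsumq] at h
    rw [hS_def, hTerase]
    linarith
  have hTne : T.Nonempty := by
    refine ⟨⟨1, by omega⟩, ?_⟩
    rw [hT, Finset.mem_filter]
    exact ⟨Finset.mem_univ _, by rw [hi₀]; exact Fin.ne_of_val_ne one_ne_zero⟩
  have hS_pos : 0 < S := Finset.sum_pos hq_pos hTne
  have hS_le : S ≤ 1 - a := by
    have := ha_le i₀
    rw [hS_eq]
    linarith
  have ha1 : a < 1 := by linarith
  -- per-term bound
  have hterm : ∀ i ∈ T, a * (-Real.log ((P i₀ (A i)).toReal)) - Hb a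
      ≤ ∫ x, llr (P i) (P i₀) x ∂(P i) := by
    intro i hi
    have hbin := birge_kl_binary (P i) (P i₀) (hKL i hi).1.1 (hKL i hi).1.2 (hA i)
    have hrb := birge_real_bound ha12 (ha_le i) (hp1 i) (hq_pos i hi) (hq1 i)
    linarith
  -- Jensen on the q's
  have hjensen : ∑ i ∈ T, Real.log ((P i₀ (A i)).toReal)
      ≤ ((N:ℝ) - 1) * Real.log (S / ((N:ℝ) - 1)) := by
    have := birge_log_sum_jensen (n := N - 1) (by omega) T hcardT
      (fun i => (P i₀ (A i)).toReal) hq_pos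
    rwa [hcast] at this
  -- sum bound
  have hsum_bound : ((N:ℝ) - 1) * (a * Real.log N)
      ≤ ∑ i ∈ T, ∫ x, llr (P i) (P i₀) x ∂(P i) := by
    have hs1 : ∑ i ∈ T, (a * (-Real.log ((P i₀ (A i)).toReal)) - Hb a)
        ≤ ∑ i ∈ T, ∫ x, llr (P i) (P i₀) x ∂(P i) := Finset.sum_le_sum hterm
    have hs2 : ∑ i ∈ T, (a * (-Real.log ((P i₀ (A i)).toReal)) - Hb a)
        = a * (-∑ i ∈ T, Real.log ((P i₀ (A i)).toReal)) - ((N:ℝ) - 1) * Hb a := by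
      rw [Finset.sum_sub_distrib, ← Finset.mul_sum, Finset.sum_const, hcardT,
        nsmul_eq_mul, hcast, ← Finset.sum_neg_distrib]
    -- chain of inequalities
    have hlog1 : -(((N:ℝ) - 1) * Real.log (S / ((N:ℝ) - 1)))
        = ((N:ℝ) - 1) * Real.log (((N:ℝ) - 1) / S) := by
      have hli : Real.log (((N:ℝ) - 1) / S) = -Real.log (S / ((N:ℝ) - 1)) := by
        rw [← Real.log_inv, inv_div]
      rw [hli]; ring
    have hlog2 : Real.log (((N:ℝ) - 1) / (1 - a)) ≤ Real.log (((N:ℝ) - 1) / S) := by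
      apply Real.log_le_log (div_pos (by linarith) (by linarith))
      exact div_le_div_of_nonneg_left (by linarith) hS_pos hS_le
    -- final calculus step
    have hGa : Gb a ≤ Gb c := Gb_antitoneOn hc ⟨ha0, ha1⟩ hca.le
    have hfinal : a * Real.log N ≤ a * Real.log (((N:ℝ) - 1) / (1 - a)) - Hb a := by
      have h1a : (0:ℝ) < 1 - a := by linarith
      have hGa' : Hb a / a + Real.log (1 - a) ≤ Real.log ((N:ℝ) - 1) - Real.log N := by
        have : Gb a ≤ Real.log (((N:ℝ) - 1) / N) := by rw [← hGc]; exact hGa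
        rw [Real.log_div (by positivity) (by positivity)] at this
        exact this
      have hmul := mul_le_mul_of_nonneg_left hGa' ha0.le
      rw [mul_add, mul_div_cancel₀ _ (ne_of_gt ha0)] at hmul
      rw [Real.log_div (by positivity) (ne_of_gt h1a)]
      nlinarith
    calc ((N:ℝ) - 1) * (a * Real.log N)
        ≤ ((N:ℝ) - 1) * (a * Real.log (((N:ℝ) - 1) / (1 - a)) - Hb a) := by
          apply mul_le_mul_of_nonneg_left hfinal (by linarith)
      _ ≤ a * (-∑ i ∈ T, Real.log ((P i₀ (A i)).toReal)) - ((N:ℝ) - 1) * Hb a := by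
          have h1 : ((N:ℝ) - 1) * Real.log (((N:ℝ) - 1) / (1 - a))
              ≤ ((N:ℝ) - 1) * Real.log (((N:ℝ) - 1) / S) :=
            mul_le_mul_of_nonneg_left hlog2 (by linarith)
          have h2 : ((N:ℝ) - 1) * Real.log (((N:ℝ) - 1) / S)
              ≤ -∑ i ∈ T, Real.log ((P i₀ (A i)).toReal) := by
            rw [← hlog1]
            linarith [hjensen]
          have h4 := mul_le_mul_of_nonneg_left (le_trans h1 h2) ha0.le
          ring_nf at h4 ⊢
          linarith [h4]
      _ = ∑ i ∈ T, (a * (-Real.log ((P i₀ (A i)).toReal)) - Hb a) := hs2.symm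
      _ ≤ ∑ i ∈ T, ∫ x, llr (P i) (P i₀) x ∂(P i) := hs1
  -- ENNReal endgame
  have hlogN_pos : 0 < Real.log N := Real.log_pos (by linarith)
  refine le_trans (iInf_le _ j) (le_trans ?_ (le_max_right _ _))
  have hPj : P j (A j) = ENNReal.ofReal a :=
    (ENNReal.ofReal_toReal (measure_ne_top _ _)).symm
  rw [hPj, ENNReal.le_div_iff_mul_le
    (Or.inl (by rw [Ne, ENNReal.ofReal_eq_zero]; push_neg; exact hlogN_pos))
    (Or.inl ENNReal.ofReal_ne_top)]
  have hmain : a * Real.log N ≤ (1/((N:ℝ)-1)) * ∑ i ∈ T, ∫ x, llr (P i) (P i₀) x ∂(P i) := by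
    rw [one_div, inv_mul_eq_div, le_div_iff₀ (by linarith : (0:ℝ) < (N:ℝ) - 1)]
    nlinarith [hsum_bound]
  calc ENNReal.ofReal a * ENNReal.ofReal (Real.log N)
      = ENNReal.ofReal (a * Real.log N) := (ENNReal.ofReal_mul ha0.le).symm
    _ ≤ ENNReal.ofReal ((1/((N:ℝ)-1)) * ∑ i ∈ T, ∫ x, llr (P i) (P i₀) x ∂(P i)) :=
        ENNReal.ofReal_le_ofReal hmain
    _ = ENNReal.ofReal (1/((N:ℝ)-1)) *
          ENNReal.ofReal (∑ i ∈ T, ∫ x, llr (P i) (P i₀) x ∂(P i)) :=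
        ENNReal.ofReal_mul (by positivity)
    _ ≤ ENNReal.ofReal (1/((N:ℝ)-1)) *
          ∑ i ∈ T, ENNReal.ofReal (∫ x, llr (P i) (P i₀) x ∂(P i)) :=
        mul_le_mul_right (birge_ofReal_sum_le _ _) _
    _ = ENNReal.ofReal (1/((N:ℝ)-1)) * ∑ i ∈ T, KLdiv (P i) (P i₀) := by
        rw [Finset.sum_congr rfl (fun i hi => ((hKL i hi).2).symm)]
end
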